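/- Let Q : E → B be a continuous map between topological spaces and Φ : E → E a homeomorphism with Q ∘ Φ = Q. Suppose every point ξ ∈ B has a connected open neighborhood V and a connected open set U ⊆ E such that Q restricted to U is a homeomorphism onto V, and such that for all η ∈ V and q ∈ U with Q(q) = η, one has Q⁻¹(η) = { Φⁿ(q) : n ∈ ℤ }. Assume moreover Φⁿ(q) = q implies n = 0 for every q ∈ E (Φ acts freely, including all iterates). Then Q is a covering map, the sets Φⁿ(U) for n ∈ ℤ are pairwise disjoint, and Q⁻¹(V) = ⋃ₙ Φⁿ(U) with each Φⁿ(U) mapped homeomorphically onto V by Q. -/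

import Mathlib

/-- Abstract covering criterion for the lift of a Birkhoff section: if `Q ∘ Φ = Q`, each
point of `B` has a connected open neighborhood `V ξ` over which `Q` restricts to a
homeomorphism from a connected open set `U ξ` onto `V ξ`, fibers over `V ξ` are exactly
`Φ`-orbits, and every nontrivial power of `Φ` is fixed-point free, then `Q` is a covering
map, the sets `Φⁿ(U ξ)` are pairwise disjoint, `Q⁻¹(V ξ) = ⋃ₙ Φⁿ(U ξ)`, and `Q` maps each
`Φⁿ(U ξ)` bijectively onto `V ξ`. -/
theorem birkhoff_lift_is_covering
    {E B : Type*} [TopologicalSpace E] [TopologicalSpace B]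
    (Q : E → B) (hQ : Continuous Q)
    (Φ : E ≃ₜ E) (hcomm : Q ∘ Φ = Q)
    (V : B → Set B) (U : B → Set E)
    (hVopen : ∀ ξ, IsOpen (V ξ)) (hVconn : ∀ ξ, IsConnected (V ξ))
    (hVmem : ∀ ξ, ξ ∈ V ξ)
    (hUopen : ∀ ξ, IsOpen (U ξ)) (hUconn : ∀ ξ, IsConnected (U ξ))
    (hbij : ∀ ξ, Set.BijOn Q (U ξ) (V ξ))
    (hopenmap : ∀ ξ, ∀ W ⊆ U ξ, IsOpen W → IsOpen (Q '' W))
    (hfiber : ∀ ξ, ∀ η ∈ V ξ, ∀ q ∈ U ξ, Q q = η →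
      Q ⁻¹' {η} = {x : E | ∃ n : ℤ, (Φ.toEquiv ^ n) q = x})
    (hfree : ∀ (q : E) (n : ℤ), (Φ.toEquiv ^ n) q = q → n = 0) :
    IsCoveringMap Q ∧
      (∀ ξ, ∀ m n : ℤ, m ≠ n →
        Disjoint ((Φ.toEquiv ^ m) '' U ξ) ((Φ.toEquiv ^ n) '' U ξ)) ∧
      (∀ ξ, Q ⁻¹' V ξ = ⋃ n : ℤ, (Φ.toEquiv ^ n) '' U ξ) ∧
      (∀ ξ, ∀ n : ℤ, Set.BijOn Q ((Φ.toEquiv ^ n) '' U ξ) (V ξ)) := by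
  classical
  have h1 : ∀ x : E, Q (Φ x) = Q x := fun x => congrFun hcomm x
  -- Q is invariant under all powers of Φ
  have hQpow : ∀ (n : ℤ) (x : E), Q ((Φ.toEquiv ^ n) x) = Q x := by
    intro n
    induction n using Int.induction_on with
    | zero => simp
    | succ k ih =>
      intro x
      rw [zpow_add_one, Equiv.Perm.mul_apply]
      rw [ih]
      exact h1 x
    | pred k ih =>
      intro x
      rw [zpow_sub_one, Equiv.Perm.mul_apply, ih]
      have h2 : (Φ : E → E) ((Φ.toEquiv)⁻¹ x) = x := by
        simp [Equiv.Perm.inv_def]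
      conv_rhs => rw [← h2]
      exact (h1 _).symm
  -- powers of Φ are homeomorphisms
  have hpow : ∀ n : ℤ, ∃ h : E ≃ₜ E, (h : E → E) = ⇑(Φ.toEquiv ^ n) := by
    intro n
    induction n using Int.induction_on with
    | zero => exact ⟨Homeomorph.refl E, by simp⟩
    | succ k ih =>
      obtain ⟨h, hh⟩ := ih
      refine ⟨Φ.trans h, ?_⟩
      funext x
      rw [zpow_add_one, Equiv.Perm.mul_apply]
      simp [hh]
    | pred k ih =>
      obtain ⟨h, hh⟩ := ih
      refine ⟨Φ.symm.trans h, ?_⟩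
      funext x
      rw [zpow_sub_one, Equiv.Perm.mul_apply]
      simp [hh, Equiv.Perm.inv_def]
  have hcont : ∀ n : ℤ, Continuous ⇑(Φ.toEquiv ^ n) := by
    intro n; obtain ⟨h, hh⟩ := hpow n; rw [← hh]; exact h.continuous
  have hopenim : ∀ (n : ℤ) (O : Set E), IsOpen O → IsOpen ((Φ.toEquiv ^ n) '' O) := by
    intro n O hO; obtain ⟨h, hh⟩ := hpow n; rw [← hh]; exact h.isOpenMap O hO
  -- disjointness
  have hdisj : ∀ ξ, ∀ m n : ℤ, m ≠ n →
      Disjoint ((Φ.toEquiv ^ m) '' U ξ) ((Φ.toEquiv ^ n) '' U ξ) := by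
    intro ξ m n hmn
    rw [Set.disjoint_left]
    rintro x ⟨a, ha, rfl⟩ ⟨b, hb, hEq⟩
    have hQab : Q b = Q a := by
      rw [← hQpow m a, ← hQpow n b, hEq]
    have hab : b = a := (hbij ξ).injOn hb ha hQab
    subst hab
    have key : (Φ.toEquiv ^ (m - n)) ((Φ.toEquiv ^ n) b) = (Φ.toEquiv ^ n) b := by
      rw [← Equiv.Perm.mul_apply, ← zpow_add, sub_add_cancel, hEq]
    have := hfree _ _ key
    omega
  -- union
  have hunion : ∀ ξ, Q ⁻¹' V ξ = ⋃ n : ℤ, (Φ.toEquiv ^ n) '' U ξ := by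
    intro ξ
    ext x
    simp only [Set.mem_preimage, Set.mem_iUnion]
    constructor
    · intro hx
      obtain ⟨q, hqU, hq⟩ := (hbij ξ).surjOn hx
      have hf := hfiber ξ (Q x) hx q hqU hq
      have hxmem : x ∈ Q ⁻¹' {Q x} := rfl
      rw [hf] at hxmem
      obtain ⟨n, hn⟩ := hxmem
      exact ⟨n, q, hqU, hn⟩
    · rintro ⟨n, a, ha, rfl⟩
      rw [hQpow]
      exact (hbij ξ).mapsTo ha
  -- bijectivity on each sheet
  have hbij' : ∀ ξ, ∀ n : ℤ, Set.BijOn Q ((Φ.toEquiv ^ n) '' U ξ) (V ξ) := by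
    intro ξ n
    refine ⟨?_, ?_, ?_⟩
    · rintro x ⟨a, ha, rfl⟩
      rw [hQpow]; exact (hbij ξ).mapsTo ha
    · rintro x ⟨a, ha, rfl⟩ y ⟨b, hb, rfl⟩ hxy
      rw [hQpow, hQpow] at hxy
      rw [(hbij ξ).injOn ha hb hxy]
    · intro η hη
      obtain ⟨a, ha, rfl⟩ := (hbij ξ).surjOn hη
      exact ⟨(Φ.toEquiv ^ n) a, ⟨a, ha, rfl⟩, hQpow n a⟩
  refine ⟨?_, hdisj, hunion, hbij'⟩
  -- covering map
  have htriv : ∀ ξ : B, ∃ t : Bundle.Trivialization ℤ Q, ξ ∈ t.baseSet := by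
    intro ξ
    haveI : Nonempty E := ⟨(hUconn ξ).nonempty.choose⟩
    set g : B → E := Function.invFunOn Q (U ξ) with hg_def
    have hgU : ∀ η ∈ V ξ, g η ∈ U ξ := by
      intro η hη
      obtain ⟨a, ha, rfl⟩ := (hbij ξ).surjOn hη
      exact Function.invFunOn_mem ⟨a, ha, rfl⟩
    have hgQ : ∀ η ∈ V ξ, Q (g η) = η := by
      intro η hη
      obtain ⟨a, ha, rfl⟩ := (hbij ξ).surjOn hη
      exact Function.invFunOn_eq ⟨a, ha, rfl⟩
    -- continuity of g on V ξ
    have hgcont : ContinuousOn g (V ξ) := by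
      intro η hη
      rw [ContinuousWithinAt]
      refine ((nhds_basis_opens (g η)).tendsto_right_iff).2 ?_
      rintro O ⟨hgO, hO⟩
      refine mem_nhdsWithin.mpr ⟨Q '' (U ξ ∩ O), hopenmap ξ _ Set.inter_subset_left
        (IsOpen.inter (hUopen ξ) hO), ⟨g η, ⟨hgU η hη, hgO⟩, hgQ η hη⟩, ?_⟩
      rintro η' ⟨⟨u, ⟨huU, huO⟩, rfl⟩, hη'V⟩
      have : g (Q u) = u := (hbij ξ).injOn (hgU _ hη'V) huU (hgQ _ hη'V)
      simpa [this]
    -- the sheet number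
    set nn : E → ℤ := fun e =>
      if h : ∃ n : ℤ, e ∈ (Φ.toEquiv ^ n) '' U ξ then h.choose else 0 with hnn_def
    have hnn_mem : ∀ e ∈ Q ⁻¹' V ξ, e ∈ (Φ.toEquiv ^ (nn e)) '' U ξ := by
      intro e he
      rw [hunion ξ] at he
      obtain ⟨s, ⟨n, rfl⟩, hs⟩ := he
      have hex : ∃ n : ℤ, e ∈ (Φ.toEquiv ^ n) '' U ξ := ⟨n, hs⟩
      simp only [hnn_def, dif_pos hex]
      exact hex.choose_spec
    have hnn_unique : ∀ (e : E) (m : ℤ), e ∈ (Φ.toEquiv ^ m) '' U ξ → nn e = m := by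
      intro e m hm
      have hex : ∃ n : ℤ, e ∈ (Φ.toEquiv ^ n) '' U ξ := ⟨m, hm⟩
      simp only [hnn_def, dif_pos hex]
      by_contra hne
      exact Set.disjoint_left.1 (hdisj ξ _ m hne) hex.choose_spec hm
    have hsheet_sub : ∀ n : ℤ, (Φ.toEquiv ^ n) '' U ξ ⊆ Q ⁻¹' V ξ := by
      rintro n x ⟨a, ha, rfl⟩
      simp only [Set.mem_preimage]
      rw [hQpow]; exact (hbij ξ).mapsTo ha
    refine ⟨{ toFun := fun e => (Q e, nn e)
              invFun := fun p => (Φ.toEquiv ^ p.2) (g p.1)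
              source := Q ⁻¹' V ξ
              target := V ξ ×ˢ (Set.univ : Set ℤ)
              map_source' := fun e he => ⟨he, Set.mem_univ _⟩
              map_target' := by
                rintro ⟨η, n⟩ ⟨hη, -⟩
                simp only [Set.mem_preimage]
                rw [hQpow, hgQ η hη]
                exact hη
              left_inv' := by
                intro e he
                obtain ⟨u, huU, hu⟩ := hnn_mem e he
                have hQe : Q e ∈ V ξ := he
                have hQu : Q u = Q e := by rw [← hu, hQpow]
                have : g (Q e) = u :=
                  (hbij ξ).injOn (hgU _ hQe) huU (by rw [hgQ _ hQe, hQu])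
                simp only [this, hu]
              right_inv' := by
                rintro ⟨η, n⟩ ⟨hη, -⟩
                have hmem : (Φ.toEquiv ^ n) (g η) ∈ (Φ.toEquiv ^ n) '' U ξ :=
                  ⟨g η, hgU η hη, rfl⟩
                have h2 : nn ((Φ.toEquiv ^ n) (g η)) = n := hnn_unique _ _ hmem
                have h3 : Q ((Φ.toEquiv ^ n) (g η)) = η := by rw [hQpow, hgQ η hη]
                simp [h2, h3]
              open_source := (hVopen ξ).preimage hQ
              open_target := (hVopen ξ).prod isOpen_univ
              continuousOn_toFun := by
                intro e he
                refine (hQ.continuousWithinAt).prodMk ?_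
                have hO : IsOpen ((Φ.toEquiv ^ (nn e)) '' U ξ) := hopenim _ _ (hUopen ξ)
                have heO : e ∈ (Φ.toEquiv ^ (nn e)) '' U ξ := hnn_mem e he
                have heq : nn =ᶠ[nhds e] fun _ => nn e := by
                  filter_upwards [hO.mem_nhds heO] with e' he'
                  exact hnn_unique e' (nn e) he'
                exact (continuousAt_const.congr heq.symm).continuousWithinAt
              continuousOn_invFun := by
                rintro ⟨η, n⟩ ⟨hη, -⟩
                have hcw : ContinuousWithinAt (fun p : B × ℤ => (Φ.toEquiv ^ n) (g p.1))
                    (V ξ ×ˢ (Set.univ : Set ℤ)) (η, n) := by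
                  refine (hcont n).continuousAt.comp_continuousWithinAt ?_
                  exact (hgcont η hη).comp (f := Prod.fst) (x := (η, n)) continuousWithinAt_fst (fun p hp => hp.1)
                refine hcw.congr_of_eventuallyEq ?_ rfl
                have : (Prod.snd ⁻¹' {n} : Set (B × ℤ)) ∈ nhds ((η, n) : B × ℤ) :=
                  ((isOpen_discrete ({n} : Set ℤ)).preimage continuous_snd).mem_nhds rfl
                filter_upwards [mem_nhdsWithin_of_mem_nhds this] with p hp
                simp only [Set.mem_preimage, Set.mem_singleton_iff] at hp
                rw [hp]
              baseSet := V ξ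
              open_baseSet := hVopen ξ
              source_eq := rfl
              target_eq := rfl
              proj_toFun := fun p _ => rfl }, hVmem ξ⟩
  choose t ht using htriv
  exact IsCoveringMap.mk Q (fun _ => ℤ) t ht
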